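/- Let A be an n×n real matrix, B an n×m real matrix, E an n×p real matrix, Q a symmetric positive definite n×n matrix with P = Q⁻¹, and β > 0 such that Q Aᵀ + A Q − 2 B Bᵀ + β·Q + β⁻¹·E Eᵀ ⪯ 0. Then for every scalar κ ≥ 1, the closed-loop matrix A_cl = A − κ·B Bᵀ P satisfies Q A_clᵀ + A_cl Q + β·Q + β⁻¹·E Eᵀ ⪯ 0. -/

import Mathlib

open Matrix

noncomputable section

lemma psd_smul {n : ℕ} {M : Matrix (Fin n) (Fin n) ℝ} (hM : M.PosSemidef)
    {c : ℝ} (hc : 0 ≤ c) : (c • M).PosSemidef := by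
  constructor
  · have h := hM.1
    unfold Matrix.IsHermitian at h ⊢
    rw [Matrix.conjTranspose_smul, h]
    simp
  · intro x
    have := hM.2 x
    simpa [Finsupp.mul_sum, mul_assoc, mul_left_comm] using mul_nonneg hc this

theorem stmt10 (n m p : ℕ)
    (A : Matrix (Fin n) (Fin n) ℝ) (B : Matrix (Fin n) (Fin m) ℝ)
    (E : Matrix (Fin n) (Fin p) ℝ)
    (Q : Matrix (Fin n) (Fin n) ℝ) (hQsym : Q.IsSymm) (hQ : Q.PosDef)
    (P : Matrix (Fin n) (Fin n) ℝ) (hP : P = Q⁻¹)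
    (β : ℝ) (hβ : 0 < β)
    (hLMI : (-(Q * Aᵀ + A * Q - (2 : ℝ) • (B * Bᵀ) + β • Q + β⁻¹ • (E * Eᵀ))).PosSemidef) :
    ∀ κ : ℝ, 1 ≤ κ →
      (-(Q * (A - κ • (B * Bᵀ * P))ᵀ + (A - κ • (B * Bᵀ * P)) * Q + β • Q +
          β⁻¹ • (E * Eᵀ))).PosSemidef := by
  intro κ hκ
  have hQinv : Invertible Q := hQ.isUnit.invertible
  have hPQ : P * Q = 1 := by rw [hP]; exact inv_mul_of_invertible Q
  have hQP : Q * P = 1 := by rw [hP]; exact mul_inv_of_invertible Q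
  have hPsym : Pᵀ = P := by
    rw [hP, Matrix.transpose_nonsing_inv, hQsym.eq]
  have hBBt : (B * Bᵀ)ᵀ = B * Bᵀ := by
    rw [Matrix.transpose_mul, Matrix.transpose_transpose]
  have hkey : -(Q * (A - κ • (B * Bᵀ * P))ᵀ + (A - κ • (B * Bᵀ * P)) * Q + β • Q +
          β⁻¹ • (E * Eᵀ))
      = (-(Q * Aᵀ + A * Q - (2 : ℝ) • (B * Bᵀ) + β • Q + β⁻¹ • (E * Eᵀ)))
        + ((2 * κ - 2) • (B * Bᵀ)) := by
    have h1 : Q * (A - κ • (B * Bᵀ * P))ᵀ = Q * Aᵀ - κ • (B * Bᵀ) := by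
      rw [Matrix.transpose_sub, Matrix.transpose_smul, Matrix.mul_sub, Matrix.mul_smul,
        Matrix.transpose_mul, hBBt, hPsym, ← Matrix.mul_assoc, hQP, Matrix.one_mul]
    have h2 : (A - κ • (B * Bᵀ * P)) * Q = A * Q - κ • (B * Bᵀ) := by
      rw [Matrix.sub_mul, Matrix.smul_mul, Matrix.mul_assoc, hPQ, Matrix.mul_one]
    rw [h1, h2]
    module
  rw [hkey]
  exact hLMI.add (psd_smul (by simpa using Matrix.posSemidef_self_mul_conjTranspose B) (by linarith))
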